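/- Let G be a Polish group and π : G → H a universally measurable homomorphism into a Polish group H which admits a compatible two-sided invariant metric. Then π is continuous. -/

import Mathlib

open MeasureTheory Set

def UniversallyMeasurable {G : Type*} [MeasurableSpace G] (A : Set G) : Prop :=
  ∀ μ : Measure G, IsProbabilityMeasure μ → NullMeasurableSet A μ

/-- Dependent choice along prefixes. -/
lemma exists_seq_prefix_choice {α : Type*} (d : α) (Q : (ℕ → α) → ℕ → α → Prop)
    (h : ∀ l : List α, ∃ x, Q (fun i => l.getD i d) l.length x) :
    ∃ g : ℕ → α, ∀ k, Q (fun i => if i < k then g i else d) k (g k) := by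
  classical
  let L : ℕ → List α := fun n => Nat.rec ([]) (fun _ l => l ++ [(h l).choose]) n
  have hLs : ∀ n, L (n + 1) = L n ++ [(h (L n)).choose] := fun n => rfl
  have hlen : ∀ n, (L n).length = n := by
    intro n; induction n with
    | zero => rfl
    | succ n ih => simp [hLs, ih]
  set g : ℕ → α := fun k => (h (L k)).choose with hg
  have key : ∀ k i, (L k).getD i d = if i < k then g i else d := by
    intro k; induction k with
    | zero => intro i; simp [L]
    | succ k ih =>
      intro i
      rw [hLs]
      rcases lt_trichotomy i k with hik | rfl | hik
      · rw [List.getD_append _ _ _ _ (by rw [hlen]; exact hik), ih i,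
          if_pos hik, if_pos (hik.trans (Nat.lt_succ_self k))]
      · simp [hlen, g]
      · rw [List.getD_eq_default _ _ (by simp [hlen]; omega), if_neg (by omega)]
  refine ⟨g, fun k => ?_⟩
  have hspec := (h (L k)).choose_spec
  convert hspec using 2
  · exact (key k _).symm
  · exact (hlen k).symm


lemma lusin_closed {X : Type*} [TopologicalSpace X] [MeasurableSpace X] [BorelSpace X]
    [TopologicalSpace.PseudoMetrizableSpace X]
    (ν : Measure X) [IsFiniteMeasure ν]
    (A : ℕ → Set X) (hA : ∀ k, NullMeasurableSet (A k) ν)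
    {ε : ENNReal} (hε : ε ≠ 0) :
    ∃ K : Set X, IsClosed K ∧ ν Kᶜ < ε ∧ ∀ k, ∃ O : Set X, IsOpen O ∧ A k ∩ K = O ∩ K := by
  classical
  obtain ⟨δ, hδpos, hδsum⟩ := ENNReal.exists_pos_sum_of_countable hε ℕ
  have hd3 : ∀ k, ((δ k : ENNReal) / 3) ≠ 0 := fun k => by
    simp [ENNReal.div_eq_zero_iff, (hδpos k).ne']
  -- for each k, choose B, W, O, F
  have main : ∀ k, ∃ bad : Set X, IsOpen bad ∧ ν bad ≤ (δ k : ENNReal) ∧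
      ∃ O : Set X, IsOpen O ∧ ∀ x, x ∉ bad → (x ∈ A k ↔ x ∈ O) := by
    intro k
    obtain ⟨B, hBsup, hBm, hBae⟩ := (hA k).exists_measurable_superset_ae_eq
    have hsym : ν ((A k \ B) ∪ (B \ A k)) = 0 := by
      have := MeasureTheory.ae_eq_set.mp hBae.symm
      exact le_antisymm ((measure_union_le _ _).trans (by simp [this.1, this.2])) (zero_le)
    have h0 : ν ((A k \ B) ∪ (B \ A k)) < (δ k : ENNReal) / 3 := by
      rw [hsym]; exact pos_iff_ne_zero.mpr (hd3 k)
    obtain ⟨W, hWsup, hWopen, hWlt⟩ := Set.exists_isOpen_lt_of_lt _ _ h0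
    obtain ⟨O, hOsup, hOopen, _, hOlt⟩ :=
      hBm.exists_isOpen_diff_lt (measure_ne_top ν B) (hd3 k)
    obtain ⟨F, hFsub, hFclosed, hFlt⟩ :=
      hBm.exists_isClosed_diff_lt (measure_ne_top ν B) (hd3 k)
    refine ⟨(O \ F) ∪ W, (hOopen.sdiff hFclosed).union hWopen, ?_, O, hOopen, ?_⟩
    · have h1 : O \ F ⊆ (O \ B) ∪ (B \ F) := fun x hx => by
        by_cases hxB : x ∈ B
        · exact Or.inr ⟨hxB, hx.2⟩
        · exact Or.inl ⟨hx.1, hxB⟩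
      calc ν ((O \ F) ∪ W) ≤ ν (O \ F) + ν W := measure_union_le _ _
        _ ≤ (ν (O \ B) + ν (B \ F)) + ν W :=
          add_le_add_left ((measure_mono h1).trans (measure_union_le _ _)) _
        _ ≤ ((δ k : ENNReal) / 3 + (δ k : ENNReal) / 3) + (δ k : ENNReal) / 3 :=
          add_le_add (add_le_add hOlt.le hFlt.le) hWlt.le
        _ ≤ (δ k : ENNReal) := by
          rw [ENNReal.div_add_div_same, ENNReal.div_add_div_same,
            show (δ k : ENNReal) + (δ k) + (δ k) = (δ k) * 3 by ring]
          exact ENNReal.div_le_of_le_mul le_rfl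
    · intro x hxbad
      have hx1 : x ∉ O \ F := fun h => hxbad (Or.inl h)
      have hx2 : x ∉ W := fun h => hxbad (Or.inr h)
      constructor
      · intro hxA
        have hxB : x ∈ B := by
          by_contra hxB
          exact hx2 (hWsup (Or.inl ⟨hxA, hxB⟩))
        exact hOsup hxB
      · intro hxO
        have hxF : x ∈ F := by
          by_contra hxF
          exact hx1 ⟨hxO, hxF⟩
        have hxB : x ∈ B := hFsub hxF
        by_contra hxA
        exact hx2 (hWsup (Or.inr ⟨hxB, hxA⟩))
  choose bad hbadopen hbadle O hOopen hiff using main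
  refine ⟨(⋃ k, bad k)ᶜ, (isOpen_iUnion hbadopen).isClosed_compl, ?_, ?_⟩
  · rw [compl_compl]
    calc ν (⋃ k, bad k) ≤ ∑' k, ν (bad k) := measure_iUnion_le _
      _ ≤ ∑' k, (δ k : ENNReal) := ENNReal.tsum_le_tsum hbadle
      _ < ε := hδsum
  · intro k
    refine ⟨O k, hOopen k, ?_⟩
    ext x
    simp only [Set.mem_inter_iff, Set.mem_compl_iff, Set.mem_iUnion, not_exists]
    exact and_congr_left fun h => hiff k x (h k)

private def partialProd {G : Type*} [Monoid G] (w : ℕ → G) : ℕ → G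
  | 0 => 1
  | k + 1 => partialProd w k * w k

private lemma partialProd_succ {G : Type*} [Monoid G] (w : ℕ → G) (k : ℕ) :
    partialProd w (k + 1) = partialProd w k * w k := rfl

private lemma partialProd_congr {G : Type*} [Monoid G] {w w' : ℕ → G} {k : ℕ}
    (h : ∀ i < k, w i = w' i) : partialProd w k = partialProd w' k := by
  induction k with
  | zero => rfl
  | succ k ih =>
    rw [partialProd_succ, partialProd_succ, ih (fun i hi => h i (hi.trans (Nat.lt_succ_self k))),
      h k (Nat.lt_succ_self k)]

private lemma zmod2_cases : ∀ x : ZMod 2, x = 0 ∨ x = 1 := by decide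

private lemma zmod2_one_add_one : (1 : ZMod 2) + 1 = 0 := by decide

private lemma zmod2_add_one_add_one : ∀ v : ZMod 2, v + 1 + 1 = v := by decide

noncomputable def cantorMeasure : Measure (ℕ → ZMod 2) := Measure.addHaarMeasure ⊤

instance : IsProbabilityMeasure cantorMeasure := ⟨by
  have := Measure.addHaarMeasure_self (K₀ := (⊤ : TopologicalSpace.PositiveCompacts (ℕ → ZMod 2)))
  simpa [cantorMeasure] using this⟩

instance : cantorMeasure.IsAddLeftInvariant := by
  unfold cantorMeasure; infer_instance

/-- Christensen's theorem: a universally measurable homomorphism into a Polish group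
with a compatible two-sided invariant metric is continuous. -/
theorem christensen_automatic_continuity
    {G : Type*} [Group G] [TopologicalSpace G] [IsTopologicalGroup G] [PolishSpace G]
    [MeasurableSpace G] [BorelSpace G]
    {H : Type*} [Group H] [MetricSpace H] [IsTopologicalGroup H] [PolishSpace H]
    (hbi : ∀ a b x : H, dist (x * a) (x * b) = dist a b ∧ dist (a * x) (b * x) = dist a b)
    (π : G →* H)
    (hπ : ∀ U : Set H, IsOpen U → UniversallyMeasurable (π ⁻¹' U)) :
    Continuous π := by
  classical
  apply continuous_of_continuousAt_one π
  by_contra hcont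
  have h1 : ¬ Filter.Tendsto π (nhds 1) (nhds (1 : H)) := by
    simpa [ContinuousAt, map_one] using hcont
  rw [Metric.tendsto_nhds] at h1
  push_neg at h1
  obtain ⟨ε, hε, hfreq⟩ := h1
  have hfreq' : ∃ᶠ x in nhds (1 : G), ε ≤ dist (π x) 1 := by
    simpa [Filter.not_eventually, not_lt] using hfreq
  letI := TopologicalSpace.upgradeIsCompletelyMetrizable G
  -- Step 1: choose the sequence g
  set Q : (ℕ → G) → ℕ → G → Prop := fun f k y =>
    ε ≤ dist (π y) 1 ∧ ∀ t : ℕ → ZMod 2,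
      dist (partialProd (fun i => if t i = 0 then 1 else f i) k)
           (partialProd (fun i => if t i = 0 then 1 else f i) k * y) < (1/2 : ℝ) ^ k with hQ
  have hstep : ∀ l : List G, ∃ y, Q (fun i => l.getD i 1) l.length y := by
    intro l
    set n := l.length with hn
    set Pfin : ((Fin n) → ZMod 2) → G := fun t =>
      partialProd (fun i => if h : i < n then (if t ⟨i, h⟩ = 0 then 1 else l.getD i 1) else 1) n
      with hPfin
    have hfin : (Set.range Pfin).Finite := Set.finite_range _
    have hV : (⋂ z ∈ Set.range Pfin, {y : G | dist z (z * y) < (1/2 : ℝ)^n}) ∈ nhds (1 : G) := by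
      rw [Filter.biInter_mem hfin]
      intro z _
      have hc : Continuous fun y : G => dist z (z * y) :=
        continuous_const.dist (continuous_mul_left z)
      have h0 : {y : G | dist z (z * y) < (1/2 : ℝ)^n} =
          (fun y => dist z (z * y)) ⁻¹' (Set.Iio ((1/2 : ℝ)^n)) := rfl
      rw [h0]
      refine hc.continuousAt.preimage_mem_nhds ?_
      have : dist z (z * (1 : G)) = 0 := by simp
      rw [this]
      exact Iio_mem_nhds (by positivity)
    obtain ⟨y, hy1, hy2⟩ := (hfreq'.and_eventually hV).exists
    refine ⟨y, hy1, fun t => ?_⟩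
    have hz : partialProd (fun i => if t i = 0 then 1 else l.getD i 1) n ∈ Set.range Pfin := by
      refine ⟨fun j => t j, ?_⟩
      exact partialProd_congr fun i hi => by rw [dif_pos hi]
    exact Set.mem_iInter₂.mp hy2 _ hz
  obtain ⟨g, hg⟩ := exists_seq_prefix_choice (1 : G) Q hstep
  have hgdist : ∀ k, ε ≤ dist (π (g k)) 1 := fun k => (hg k).1
  set w : (ℕ → ZMod 2) → ℕ → G := fun s i => if s i = 0 then 1 else g i with hw
  set p : (ℕ → ZMod 2) → ℕ → G := fun s k => partialProd (w s) k with hp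
  have hgstep : ∀ (s : ℕ → ZMod 2) k, dist (p s k) (p s k * g k) < (1/2 : ℝ)^k := by
    intro s k
    have h2 := (hg k).2 s
    have he : partialProd (fun i => if s i = 0 then 1 else (if i < k then g i else 1)) k
        = p s k := partialProd_congr fun i hi => by
      by_cases h : s i = 0 <;> simp [hw, h, hi]
    rwa [he] at h2
  have hstepdist : ∀ (s : ℕ → ZMod 2) k, dist (p s k) (p s (k+1)) ≤ (1/2 : ℝ)^k := by
    intro s k
    rcases zmod2_cases (s k) with h | h
    · have heq : p s (k+1) = p s k := by
        show p s k * w s k = p s k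
        simp [hw, h]
      simp [heq]
    · have heq : p s (k+1) = p s k * g k := by
        show p s k * w s k = p s k * g k
        simp [hw, h]
      rw [heq]; exact (hgstep s k).le
  have hcauchy : ∀ s : ℕ → ZMod 2, ∃ x : G, Filter.Tendsto (p s) Filter.atTop (nhds x) := by
    intro s
    apply cauchySeq_tendsto_of_complete
    exact cauchySeq_of_le_geometric (1/2) 1 (by norm_num)
      (fun k => by simpa using hstepdist s k)
  choose φ hφ using hcauchy
  have hunif : ∀ (s : ℕ → ZMod 2) k, dist (p s k) (φ s) ≤ 1 * (1/2 : ℝ)^k / (1 - 1/2) :=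
    fun s k => dist_le_of_le_geometric_of_tendsto (1/2) 1 (by norm_num)
      (fun m => by simpa using hstepdist s m) (hφ s) k
  have hpcont : ∀ k, Continuous fun s : ℕ → ZMod 2 => p s k := by
    intro k; induction k with
    | zero => exact continuous_const
    | succ k ih =>
      show Continuous fun s => p s k * w s k
      apply ih.mul
      have h3 : (fun s : ℕ → ZMod 2 => w s k)
          = (fun v : ZMod 2 => if v = 0 then 1 else g k) ∘ (fun s : ℕ → ZMod 2 => s k) := rfl
      rw [h3]
      exact continuous_of_discreteTopology.comp (continuous_apply k)
  have hφcont : Continuous φ := by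
    apply TendstoUniformly.continuous (F := fun k (s : ℕ → ZMod 2) => p s k)
      (p := Filter.atTop)
    · rw [Metric.tendstoUniformly_iff]
      intro δ hδ
      have hto : Filter.Tendsto (fun k : ℕ => 1 * (1/2 : ℝ)^k / (1 - 1/2))
          Filter.atTop (nhds 0) := by
        have h4 : Filter.Tendsto (fun k : ℕ => ((1:ℝ)/2)^k) Filter.atTop (nhds 0) :=
          tendsto_pow_atTop_nhds_zero_of_lt_one (by norm_num) (by norm_num)
        have := h4.const_mul (2 : ℝ)
        simp only [mul_zero] at this
        refine this.congr fun k => by ring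
      filter_upwards [hto.eventually (gt_mem_nhds hδ)] with k hk s
      exact lt_of_le_of_lt (by rw [dist_comm]; exact hunif s k) hk
    · exact (Filter.Eventually.of_forall hpcont).frequently
  set ψ : (ℕ → ZMod 2) → H := fun s => π (φ s) with hψ
  -- Step 2: flip identity
  have hflip : ∀ (s : ℕ → ZMod 2) (n : ℕ), ε ≤ dist (ψ (s + Pi.single n 1)) (ψ s) := by
    have key : ∀ (s : ℕ → ZMod 2) (n : ℕ), s n = 0 →
        ε ≤ dist (ψ (s + Pi.single n 1)) (ψ s) := by
      intro s n hsn
      set s' := s + Pi.single n 1 with hs'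
      have hs'same : ∀ i, i ≠ n → s' i = s i := fun i hi => by
        simp [hs', Pi.single_eq_of_ne hi]
      have hs'n : s' n = 1 := by
        simp only [hs', Pi.add_apply, Pi.single_eq_same, hsn, zero_add]
      have hwsame : ∀ i, i ≠ n → w s' i = w s i := fun i hi => by
        simp only [hw, hs'same i hi]
      have hclaim : ∀ k, n + 1 ≤ k → p s' k = p s n * g n * (p s n)⁻¹ * p s k := by
        intro k hk
        induction k with
        | zero => omega
        | succ k ih =>
          rcases Nat.lt_or_ge n k with hlt | hge
          · have ihk := ih (by omega)
            calc p s' (k+1) = p s' k * w s' k := rfl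
              _ = p s n * g n * (p s n)⁻¹ * p s k * w s k := by
                  rw [ihk, hwsame k (by omega)]
              _ = p s n * g n * (p s n)⁻¹ * p s (k+1) := by
                  rw [mul_assoc]; rfl
          · have hkn : k = n := by omega
            subst hkn
            have h5 : p s' k = p s k := partialProd_congr fun i hi =>
              hwsame i (by omega)
            have h6 : w s' k = g k := by
              simp only [hw, hs'n]
              norm_num
            have h7 : w s k = 1 := by
              simp [hw, hsn]
            calc p s' (k+1) = p s' k * w s' k := rfl
              _ = p s k * g k := by rw [h5, h6]
              _ = p s k * g k * (p s k)⁻¹ * (p s k * w s k) := by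
                  rw [h7, mul_one]; group
      have hlim1 : Filter.Tendsto (fun k => p s' (k + (n+1))) Filter.atTop (nhds (φ s')) :=
        (hφ s').comp (Filter.tendsto_add_atTop_nat (n+1))
      have hlim2 : Filter.Tendsto (fun k => p s' (k + (n+1))) Filter.atTop
          (nhds (p s n * g n * (p s n)⁻¹ * φ s)) := by
        have h8 : (fun k => p s' (k + (n+1))) = fun k => p s n * g n * (p s n)⁻¹ * p s (k + (n+1)) := by
          funext k; exact hclaim _ (by omega)
        rw [h8]
        exact ((hφ s).comp (Filter.tendsto_add_atTop_nat (n+1))).const_mul _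
      have hφs' : φ s' = p s n * g n * (p s n)⁻¹ * φ s := tendsto_nhds_unique hlim1 hlim2
      have hπeq : ψ s' = π (p s n) * π (g n) * (π (p s n))⁻¹ * ψ s := by
        rw [hψ]; simp only [hφs', map_mul, map_inv]
      set a := π (p s n)
      set b := π (g n)
      set x := ψ s
      rw [hπeq]
      have e1 : dist (a * b * a⁻¹ * x) x = dist (a * b * a⁻¹) 1 := by
        have h9 := (hbi (a * b * a⁻¹) 1 x).2
        rwa [one_mul] at h9
      have e2 : dist (a * b * a⁻¹) 1 = dist b 1 := by
        have h3 := (hbi (a * b * a⁻¹) 1 a).2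
        rw [one_mul, inv_mul_cancel_right] at h3
        have h4 := (hbi b 1 a).1
        rw [mul_one] at h4
        rw [← h3, h4]
      rw [e1, e2]
      exact hgdist n
    intro s n
    rcases zmod2_cases (s n) with h | h
    · exact key s n h
    · have h0 : (s + (Pi.single n 1 : ℕ → ZMod 2)) n = 0 := by
        simp only [Pi.add_apply, Pi.single_eq_same, h]
        exact zmod2_one_add_one
      have h2 := key (s + (Pi.single n 1 : ℕ → ZMod 2)) n h0
      have h3 : s + (Pi.single n 1 : ℕ → ZMod 2) + (Pi.single n 1 : ℕ → ZMod 2) = s := by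
        funext i
        by_cases hi : i = n
        · subst hi
          simp only [Pi.add_apply, Pi.single_eq_same]
          exact zmod2_add_one_add_one (s i)
        · simp [Pi.single_eq_of_ne hi]
      rw [h3] at h2
      rw [dist_comm]
      exact h2
  -- Step 3: measure theory on the Cantor group
  have hφmeas : Measurable φ := hφcont.measurable
  set ν : Measure (ℕ → ZMod 2) := cantorMeasure with hν
  set μ : Measure G := ν.map φ with hμ
  haveI : IsProbabilityMeasure μ := Measure.isProbabilityMeasure_map hφmeas.aemeasurable
  have hqmp : Measure.QuasiMeasurePreserving φ ν μ :=
    ⟨hφmeas, Measure.AbsolutelyContinuous.rfl⟩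
  obtain ⟨ubas, hubas⟩ : ∃ u : ℕ → Set H, Set.range u = TopologicalSpace.countableBasis H := by
    have hne : (TopologicalSpace.countableBasis H).Nonempty := by
      obtain ⟨t, htb, -, -⟩ := (TopologicalSpace.isBasis_countableBasis H).exists_subset_of_mem_open
        (Set.mem_univ (1 : H)) isOpen_univ
      exact ⟨t, htb⟩
    obtain ⟨u, hu⟩ := (TopologicalSpace.countable_countableBasis H).exists_eq_range hne
    exact ⟨u, hu.symm⟩
  set A : ℕ → Set (ℕ → ZMod 2) := fun k => φ ⁻¹' (⇑π ⁻¹' (ubas k)) with hA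
  have hameas : ∀ k, NullMeasurableSet (A k) ν := by
    intro k
    have hopen : IsOpen (ubas k) :=
      TopologicalSpace.isOpen_of_mem_countableBasis (hubas ▸ Set.mem_range_self k)
    exact (hπ (ubas k) hopen μ inferInstance).preimage hqmp
  obtain ⟨K, hKclosed, hKsmall, hKopens⟩ :=
    lusin_closed ν A hameas (ε := 1/2) (by norm_num)
  -- continuity of ψ on K
  have hψK : ContinuousOn ψ K := by
    intro s hs
    intro V hV
    obtain ⟨t, htb, hmem, hsub⟩ :=
      (TopologicalSpace.isBasis_countableBasis H).mem_nhds_iff.mp hV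
    obtain ⟨k, rfl⟩ : ∃ k, ubas k = t := by
      have : t ∈ Set.range ubas := hubas ▸ htb
      obtain ⟨k, hk⟩ := this
      exact ⟨k, hk⟩
    obtain ⟨O, hOopen, hOeq⟩ := hKopens k
    have hsAK : s ∈ A k ∩ K := ⟨hmem, hs⟩
    have hsO : s ∈ O := (hOeq ▸ hsAK).1
    rw [Filter.mem_map]
    apply mem_nhdsWithin.2
    refine ⟨O, hOopen, hsO, fun y hy => ?_⟩
    have : y ∈ A k ∩ K := hOeq ▸ ⟨hy.1, hy.2⟩
    exact hsub this.1
  -- positive-measure intersections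
  have hKint : ∀ n : ℕ, ∃ s, s ∈ K ∧ (Pi.single n 1 : ℕ → ZMod 2) + s ∈ K := by
    intro n
    set L : Set (ℕ → ZMod 2) := (fun s : ℕ → ZMod 2 => (Pi.single n 1 : ℕ → ZMod 2) + s) ⁻¹' K with hL
    have hLc : ν Lᶜ = ν Kᶜ := by
      rw [hL, ← Set.preimage_compl]
      exact measure_preimage_add ν _ _
    have hpos : ν (K ∩ L) ≠ 0 := by
      intro hzero
      have hcover : (Set.univ : Set (ℕ → ZMod 2)) ⊆ (K ∩ L) ∪ (Kᶜ ∪ Lᶜ) := by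
        intro z _
        by_cases h1 : z ∈ K
        · by_cases h2 : z ∈ L
          · exact Or.inl ⟨h1, h2⟩
          · exact Or.inr (Or.inr h2)
        · exact Or.inr (Or.inl h1)
      have h5 : (1 : ENNReal) ≤ ν (K ∩ L) + (ν Kᶜ + ν Lᶜ) := by
        calc (1 : ENNReal) = ν Set.univ := (measure_univ (μ := ν)).symm
          _ ≤ ν ((K ∩ L) ∪ (Kᶜ ∪ Lᶜ)) := measure_mono hcover
          _ ≤ ν (K ∩ L) + ν (Kᶜ ∪ Lᶜ) := measure_union_le _ _
          _ ≤ ν (K ∩ L) + (ν Kᶜ + ν Lᶜ) := by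
              exact add_le_add_right (measure_union_le _ _) _
      rw [hzero, zero_add, hLc] at h5
      have h6 : ν Kᶜ + ν Kᶜ < 1 := by
        calc ν Kᶜ + ν Kᶜ < 1/2 + 1/2 := by
              exact ENNReal.add_lt_add hKsmall hKsmall
          _ = 1 := ENNReal.add_halves 1
      exact absurd (h5.trans_lt h6) (lt_irrefl _)
    obtain ⟨s, hsK, hsL⟩ := MeasureTheory.nonempty_of_measure_ne_zero hpos
    exact ⟨s, hsK, hsL⟩
  choose sq hsqK hsqL using hKint
  -- Step 4: the contradiction via sequential compactness
  have hKcompact : IsCompact K := hKclosed.isCompact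
  obtain ⟨aa, haaK, σ, hσmono, hσtendsto⟩ := hKcompact.tendsto_subseq hsqK
  set tq : ℕ → (ℕ → ZMod 2) := fun k => (Pi.single (σ k) 1 : ℕ → ZMod 2) + sq (σ k) with htq
  have htqK : ∀ k, tq k ∈ K := fun k => hsqL (σ k)
  have htqtendsto : Filter.Tendsto tq Filter.atTop (nhds aa) := by
    rw [tendsto_pi_nhds]
    intro i
    have h1 : Filter.Tendsto (fun k => sq (σ k) i) Filter.atTop (nhds (aa i)) :=
      tendsto_pi_nhds.mp hσtendsto i
    apply h1.congr'
    filter_upwards [Filter.eventually_gt_atTop i] with k hk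
    have hne : σ k ≠ i := by
      have := hσmono.le_apply (x := k)
      omega
    simp [htq, Pi.single_eq_of_ne (Ne.symm hne)]
  have hψs : Filter.Tendsto (fun k => ψ (sq (σ k))) Filter.atTop (nhds (ψ aa)) := by
    apply (hψK aa haaK).tendsto.comp
    rw [tendsto_nhdsWithin_iff]
    exact ⟨hσtendsto, Filter.Eventually.of_forall fun k => hsqK (σ k)⟩
  have hψt : Filter.Tendsto (fun k => ψ (tq k)) Filter.atTop (nhds (ψ aa)) := by
    apply (hψK aa haaK).tendsto.comp
    rw [tendsto_nhdsWithin_iff]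
    exact ⟨htqtendsto, Filter.Eventually.of_forall htqK⟩
  have hdistto : Filter.Tendsto (fun k => dist (ψ (tq k)) (ψ (sq (σ k))))
      Filter.atTop (nhds 0) := by
    have := hψt.dist hψs
    simpa using this
  have hdistge : ∀ k, ε ≤ dist (ψ (tq k)) (ψ (sq (σ k))) := by
    intro k
    have := hflip (sq (σ k)) (σ k)
    rwa [show sq (σ k) + (Pi.single (σ k) 1 : ℕ → ZMod 2) = tq k from add_comm _ _] at this
  have : ε ≤ 0 := ge_of_tendsto hdistto (Filter.Eventually.of_forall hdistge)
  linarith
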